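/- Let t ≥ 3 and 1 ≤ s ≤ t be fixed integers. For a positive integer n ≥ t, let 𝒴 be a uniformly random t-element subset of {1, ..., n} and let Y_s denote the s-th smallest element of 𝒴. Then for each ℓ ∈ {1,...,n}, P(Y_s = ℓ) = C(ℓ−1, s−1)·C(n−ℓ, t−s) / C(n, t); moreover, there exists a constant C > 0 (depending only on s and t) such that for all n ≥ t and all ℓ ∈ {1,...,n}, | P(Y_s = ℓ) − (1/n)·Φ_s^t(ℓ/n) | ≤ C·n^{−1.5}, where Φ_s^t(y) = (t!/((s−1)!·(t−s)!))·y^{s−1}·(1−y)^{t−s}. -/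

import Mathlib

/-- The `s`-th smallest element of a finset of naturals (1-based: `s = 1` gives the
minimum), with junk value `0` if `s` exceeds the cardinality. -/
def nthSmallest (Y : Finset ℕ) (s : ℕ) : ℕ :=
  (Y.sort (· ≤ ·)).getD (s - 1) 0

/-- The density `Φ_s^t(y) = (t!/((s−1)!·(t−s)!))·y^{s−1}·(1−y)^{t−s}` of the `s`-th
order statistic of `t` i.i.d. uniform `[0,1]` random variables. -/
noncomputable def PhiST (s t : ℕ) (y : ℝ) : ℝ :=
  ((Nat.factorial t : ℝ) / ((Nat.factorial (s - 1) : ℝ) * (Nat.factorial (t - s) : ℝ))) *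
    y ^ (s - 1) * (1 - y) ^ (t - s)


open Finset

lemma countP_lt_get_of_sorted : ∀ (L : List ℕ), L.Pairwise (· < ·) → ∀ i (h : i < L.length),
    L.countP (fun y => y < L.get ⟨i, h⟩) = i := by
  intro L hL
  induction L with
  | nil => intro i h; simp at h
  | cons x xs ih =>
    have hx : ∀ y ∈ xs, x < y := fun y hy => (List.pairwise_cons.1 hL).1 y hy
    have hxs : xs.Pairwise (· < ·) := (List.pairwise_cons.1 hL).2
    intro i h
    match i with
    | 0 =>
      simp only [List.get]
      rw [List.countP_eq_zero]
      intro a ha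
      simp only [decide_eq_true_eq]
      rcases List.mem_cons.1 ha with rfl | ha
      · omega
      · exact fun hc => absurd (hx a ha) (by omega)
    | (j+1) =>
      have hj : j < xs.length := by simpa using h
      have hget : (x :: xs).get ⟨j+1, h⟩ = xs.get ⟨j, hj⟩ := rfl
      rw [hget, List.countP_cons]
      have : x < xs.get ⟨j, hj⟩ := hx _ (xs.get_mem _)
      simp only [decide_eq_true_eq, this, if_true]
      rw [ih hxs j hj]

lemma filter_lt_card (Y : Finset ℕ) (ℓ : ℕ) :
    (Y.filter (fun y => y < ℓ)).card = (Y.sort (· ≤ ·)).countP (fun y => y < ℓ) := by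
  have hp : List.Perm (Y.sort (· ≤ ·)) Y.toList := Finset.sort_perm_toList _ _
  rw [hp.countP_eq, ← Multiset.coe_countP, Finset.coe_toList,
    Multiset.countP_eq_card_filter, ← Finset.filter_val, ← Finset.card_def]

lemma nthSmallest_eq_iff {Y : Finset ℕ} {t s ℓ : ℕ} (hY : Y.card = t)
    (hs : 1 ≤ s) (hst : s ≤ t) :
    nthSmallest Y s = ℓ ↔ ℓ ∈ Y ∧ (Y.filter (fun y => y < ℓ)).card = s - 1 := by
  set L := Y.sort (· ≤ ·) with hL
  have hlen : L.length = t := by rw [hL, Finset.length_sort, hY]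
  have hsl : s - 1 < L.length := by omega
  have hsort : L.Pairwise (· < ·) := (Finset.sortedLT_sort Y).pairwise
  have hnth : nthSmallest Y s = L.get ⟨s - 1, hsl⟩ := by
    rw [nthSmallest, ← hL, List.getD_eq_getElem (hn := hsl)]; rfl
  constructor
  · rintro rfl
    refine ⟨?_, ?_⟩
    · rw [hnth, ← Finset.mem_sort (· ≤ ·)]; exact L.get_mem _
    · rw [filter_lt_card, hnth, countP_lt_get_of_sorted L hsort _ hsl]
  · rintro ⟨hmem, hcard⟩
    rw [← Finset.mem_sort (α := ℕ) (· ≤ ·), ← hL] at hmem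
    obtain ⟨i, hi, rfl⟩ := List.mem_iff_get.1 hmem
    rw [filter_lt_card, countP_lt_get_of_sorted L hsort _ i.isLt] at hcard
    rw [hnth]
    congr
    omega

lemma mem_char {n t s ℓ : ℕ} (hs : 1 ≤ s) (hst : s ≤ t) {Y : Finset ℕ}
    (hmem : Y ∈ ((Finset.Icc 1 n).powersetCard t).filter (fun Y => nthSmallest Y s = ℓ)) :
    Y ⊆ Icc 1 n ∧ Y.card = t ∧ ℓ ∈ Y ∧ (Y.filter (fun y => y < ℓ)).card = s - 1 ∧
      (Y.filter (fun y => ℓ < y)).card = t - s := by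
  rw [Finset.mem_filter, Finset.mem_powersetCard] at hmem
  obtain ⟨⟨hsub, hcard⟩, hnth⟩ := hmem
  obtain ⟨hℓY, hlt⟩ := (nthSmallest_eq_iff hcard hs hst).1 hnth
  refine ⟨hsub, hcard, hℓY, hlt, ?_⟩
  have hsplit : (Y.filter (fun y => y < ℓ)).card + (Y.filter (fun y => ¬ y < ℓ)).card = t := by
    rw [Finset.card_filter_add_card_filter_not, hcard]
  have heq : Y.filter (fun y => ¬ y < ℓ) = insert ℓ (Y.filter (fun y => ℓ < y)) := by
    ext y
    simp only [Finset.mem_filter, Finset.mem_insert]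
    constructor
    · rintro ⟨hy, hy2⟩
      rcases Nat.lt_or_ge ℓ y with h | h
      · exact Or.inr ⟨hy, h⟩
      · exact Or.inl (by omega)
    · rintro (rfl | ⟨hy, hy2⟩)
      · exact ⟨hℓY, by omega⟩
      · exact ⟨hy, by omega⟩
  have hni : ℓ ∉ Y.filter (fun y => ℓ < y) := by simp
  rw [heq, Finset.card_insert_of_notMem hni] at hsplit
  omega

lemma count_eq {s t n ℓ : ℕ} (hs : 1 ≤ s) (hst : s ≤ t) (hℓ1 : 1 ≤ ℓ) (hℓn : ℓ ≤ n) :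
    (((Finset.Icc 1 n).powersetCard t).filter (fun Y => nthSmallest Y s = ℓ)).card
      = Nat.choose (ℓ - 1) (s - 1) * Nat.choose (n - ℓ) (t - s) := by
  have hbij : (((Finset.Icc 1 n).powersetCard t).filter
        (fun Y => nthSmallest Y s = ℓ)).card
      = ((Finset.Icc 1 (ℓ-1)).powersetCard (s-1) ×ˢ
          (Finset.Icc (ℓ+1) n).powersetCard (t-s)).card := by
    apply Finset.card_nbij'
      (i := fun Y => (Y.filter (fun y => y < ℓ), Y.filter (fun y => ℓ < y)))
      (j := fun p => insert ℓ (p.1 ∪ p.2))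
    · intro Y hY
      obtain ⟨hsub, hcard, hℓY, h1, h2⟩ := mem_char hs hst hY
      rw [Finset.mem_coe, Finset.mem_product, Finset.mem_powersetCard, Finset.mem_powersetCard]
      refine ⟨⟨?_, h1⟩, ?_, h2⟩
      · intro y hy
        rw [Finset.mem_filter] at hy
        have := hsub hy.1
        rw [Finset.mem_Icc] at this ⊢
        omega
      · intro y hy
        rw [Finset.mem_filter] at hy
        have := hsub hy.1
        rw [Finset.mem_Icc] at this ⊢
        omega
    · rintro ⟨A, B⟩ hAB
      rw [Finset.mem_coe, Finset.mem_product, Finset.mem_powersetCard, Finset.mem_powersetCard] at hAB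
      obtain ⟨⟨hA, hAcard⟩, hB, hBcard⟩ := hAB
      have hAlt : ∀ a ∈ A, a < ℓ := by
        intro a ha; have := hA ha; rw [Finset.mem_Icc] at this; omega
      have hBgt : ∀ b ∈ B, ℓ < b := by
        intro b hb; have := hB hb; rw [Finset.mem_Icc] at this; omega
      have hℓnotin : ℓ ∉ A ∪ B := by
        rw [Finset.mem_union]
        rintro (h | h)
        · exact absurd (hAlt ℓ h) (lt_irrefl ℓ)
        · exact absurd (hBgt ℓ h) (lt_irrefl ℓ)
      have hdisj : Disjoint A B := by
        rw [Finset.disjoint_left]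
        intro a ha hb
        exact absurd (hBgt a hb) (by have := hAlt a ha; omega)
      have hcard : (insert ℓ (A ∪ B)).card = t := by
        rw [Finset.card_insert_of_notMem hℓnotin, Finset.card_union_of_disjoint hdisj,
          hAcard, hBcard]
        omega
      rw [Finset.mem_coe, Finset.mem_filter, Finset.mem_powersetCard]
      refine ⟨⟨?_, hcard⟩, ?_⟩
      · intro y hy
        rw [Finset.mem_insert, Finset.mem_union] at hy
        rw [Finset.mem_Icc]
        rcases hy with rfl | h | h
        · omega
        · have := hA h; rw [Finset.mem_Icc] at this; omega
        · have := hB h; rw [Finset.mem_Icc] at this; omega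
      · rw [nthSmallest_eq_iff hcard hs hst]
        refine ⟨Finset.mem_insert_self _ _, ?_⟩
        have : (insert ℓ (A ∪ B)).filter (fun y => y < ℓ) = A := by
          ext y
          simp only [Finset.mem_filter, Finset.mem_insert, Finset.mem_union]
          constructor
          · rintro ⟨rfl | h | h, hlt⟩
            · omega
            · exact h
            · exact absurd (hBgt y h) (by omega)
          · intro h; exact ⟨Or.inr (Or.inl h), hAlt y h⟩
        rw [this, hAcard]
    · intro Y hY
      obtain ⟨hsub, hcard, hℓY, h1, h2⟩ := mem_char hs hst hY
      ext y
      simp only [Finset.mem_insert, Finset.mem_union, Finset.mem_filter]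
      constructor
      · rintro (rfl | ⟨h, _⟩ | ⟨h, _⟩) <;> assumption
      · intro hy
        rcases Nat.lt_trichotomy y ℓ with h | h | h
        · exact Or.inr (Or.inl ⟨hy, h⟩)
        · exact Or.inl h
        · exact Or.inr (Or.inr ⟨hy, h⟩)
    · rintro ⟨A, B⟩ hAB
      rw [Finset.mem_coe, Finset.mem_product, Finset.mem_powersetCard, Finset.mem_powersetCard] at hAB
      obtain ⟨⟨hA, hAcard⟩, hB, hBcard⟩ := hAB
      have hAlt : ∀ a ∈ A, a < ℓ := by
        intro a ha; have := hA ha; rw [Finset.mem_Icc] at this; omega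
      have hBgt : ∀ b ∈ B, ℓ < b := by
        intro b hb; have := hB hb; rw [Finset.mem_Icc] at this; omega
      have e1 : (insert ℓ (A ∪ B)).filter (fun y => y < ℓ) = A := by
        ext y
        simp only [Finset.mem_filter, Finset.mem_insert, Finset.mem_union]
        constructor
        · rintro ⟨rfl | h | h, hlt⟩
          · omega
          · exact h
          · exact absurd (hBgt y h) (by omega)
        · intro h; exact ⟨Or.inr (Or.inl h), hAlt y h⟩
      have e2 : (insert ℓ (A ∪ B)).filter (fun y => ℓ < y) = B := by
        ext y
        simp only [Finset.mem_filter, Finset.mem_insert, Finset.mem_union]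
        constructor
        · rintro ⟨rfl | h | h, hlt⟩
          · omega
          · exact absurd (hAlt y h) (by omega)
          · exact h
        · intro h; exact ⟨Or.inr (Or.inr h), hBgt y h⟩
      simp only [e1, e2]
  rw [hbij, Finset.card_product, Finset.card_powersetCard, Finset.card_powersetCard,
    Nat.card_Icc, Nat.card_Icc]
  congr 2 <;> omega

lemma pow_le_descFactorial_add (m : ℕ) : ∀ k : ℕ, m ^ k ≤ m.descFactorial k + k * k * m ^ (k - 1)
  | 0 => by simp
  | (k+1) => by
    have ih := pow_le_descFactorial_add m k
    have h1 : m ^ (k + 1) = m * m ^ k := by ring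
    have h2 : m * m ^ k ≤ m * m.descFactorial k + k * k * (m * m ^ (k - 1)) := by
      calc m * m ^ k ≤ m * (m.descFactorial k + k * k * m ^ (k - 1)) :=
            Nat.mul_le_mul_left m ih
        _ = m * m.descFactorial k + k * k * (m * m ^ (k - 1)) := by ring
    have h3 : k * k * (m * m ^ (k - 1)) ≤ k * k * m ^ k := by
      cases k with
      | zero => simp
      | succ j => apply Nat.mul_le_mul_left; rw [pow_succ, Nat.mul_comm]; simp
    have h4 : m * m.descFactorial k ≤ m.descFactorial (k+1) + k * m ^ k := by
      have : m * m.descFactorial k ≤ (m - k) * m.descFactorial k + k * m.descFactorial k := by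
        have hm : m ≤ (m - k) + k := by omega
        calc m * m.descFactorial k ≤ ((m - k) + k) * m.descFactorial k :=
              Nat.mul_le_mul_right _ hm
          _ = (m - k) * m.descFactorial k + k * m.descFactorial k := by ring
      calc m * m.descFactorial k ≤ (m - k) * m.descFactorial k + k * m.descFactorial k := this
        _ ≤ (m - k) * m.descFactorial k + k * m ^ k := by
            exact Nat.add_le_add_left (Nat.mul_le_mul_left _ (Nat.descFactorial_le_pow m k)) _
        _ = m.descFactorial (k+1) + k * m ^ k := by rw [Nat.descFactorial_succ]
    calc m ^ (k+1) = m * m ^ k := h1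
      _ ≤ m * m.descFactorial k + k * k * (m * m ^ (k - 1)) := h2
      _ ≤ (m.descFactorial (k+1) + k * m ^ k) + k * k * m ^ k := Nat.add_le_add h4 h3
      _ ≤ m.descFactorial (k+1) + (k+1) * (k+1) * m ^ ((k+1) - 1) := by
          simp only [Nat.add_sub_cancel]
          nlinarith [Nat.zero_le (m ^ k)]

lemma succ_pow_le (m : ℕ) : ∀ k : ℕ, (m + 1) ^ k ≤ m ^ k + k * (m + 1) ^ (k - 1)
  | 0 => by simp
  | (k+1) => by
    have ih := succ_pow_le m k
    have h3 : k * ((m + 1) * (m + 1) ^ (k - 1)) ≤ k * (m + 1) ^ k := by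
      cases k with
      | zero => simp
      | succ j => apply Nat.mul_le_mul_left; rw [pow_succ, Nat.mul_comm]; simp
    calc (m+1) ^ (k+1) = (m+1) * (m+1) ^ k := by ring
      _ ≤ (m+1) * (m ^ k + k * (m+1) ^ (k-1)) := Nat.mul_le_mul_left _ ih
      _ = m * m ^ k + m ^ k + k * ((m+1) * (m+1) ^ (k-1)) := by ring
      _ ≤ m ^ (k+1) + (m+1) ^ k + k * (m+1) ^ k := by
          rw [pow_succ, Nat.mul_comm (m^k) m]
          exact Nat.add_le_add (Nat.add_le_add_left (Nat.pow_le_pow_left (by omega) k) _) h3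
      _ = m ^ (k+1) + (k+1) * (m+1) ^ ((k+1) - 1) := by simp; ring

lemma sub_pow_le_descFactorial (n T : ℕ) : ∀ k : ℕ, k ≤ T → (n - T) ^ k ≤ n.descFactorial k
  | 0, _ => by simp
  | (k+1), h => by
    have ih := sub_pow_le_descFactorial n T k (by omega)
    rw [Nat.descFactorial_succ, pow_succ, Nat.mul_comm]
    exact Nat.mul_le_mul (by omega) ih

lemma key_nat (a b n ℓ : ℕ) (h1 : 1 ≤ ℓ) (h2 : ℓ ≤ n) :
    ℓ ^ a * (n - ℓ) ^ b ≤ (ℓ - 1).descFactorial a * (n - ℓ).descFactorial b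
      + ((a * a + a) + (b * b + b)) * n ^ (a + b - 1) := by
  have hA : ℓ ^ a ≤ (ℓ - 1).descFactorial a + (a * a + a) * n ^ (a - 1) := by
    have e1 : ℓ = (ℓ - 1) + 1 := by omega
    have h2' := succ_pow_le (ℓ - 1) a
    rw [← e1] at h2'
    have h3 := pow_le_descFactorial_add (ℓ - 1) a
    have h4 : (ℓ - 1) ^ (a - 1) ≤ n ^ (a - 1) := Nat.pow_le_pow_left (by omega) _
    have h5 : ℓ ^ (a - 1) ≤ n ^ (a - 1) := Nat.pow_le_pow_left h2 _
    nlinarith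
  have hB : (n - ℓ) ^ b ≤ (n - ℓ).descFactorial b + (b * b + b) * n ^ (b - 1) := by
    have h3 := pow_le_descFactorial_add (n - ℓ) b
    have h4 : (n - ℓ) ^ (b - 1) ≤ n ^ (b - 1) := Nat.pow_le_pow_left (by omega) _
    have h5 : b * b * (n - ℓ) ^ (b - 1) ≤ (b * b + b) * n ^ (b - 1) :=
      Nat.mul_le_mul (by omega) h4
    exact le_trans h3 (Nat.add_le_add_left h5 _)
  have hy2n : (n - ℓ) ^ b ≤ n ^ b := Nat.pow_le_pow_left (by omega) _
  have hD1 : (ℓ - 1).descFactorial a ≤ n ^ a :=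
    le_trans (Nat.descFactorial_le_pow _ _) (Nat.pow_le_pow_left (by omega) _)
  have step1 : ℓ ^ a * (n - ℓ) ^ b ≤ (ℓ - 1).descFactorial a * (n - ℓ) ^ b
      + (a * a + a) * n ^ (a + b - 1) := by
    have t1 : (a * a + a) * n ^ (a - 1) * (n - ℓ) ^ b ≤ (a * a + a) * n ^ (a + b - 1) := by
      rcases Nat.eq_zero_or_pos a with rfl | hapos
      · simp
      · calc (a * a + a) * n ^ (a - 1) * (n - ℓ) ^ b
            ≤ (a * a + a) * n ^ (a - 1) * n ^ b := Nat.mul_le_mul_left _ hy2n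
          _ = (a * a + a) * n ^ (a - 1 + b) := by rw [Nat.mul_assoc, ← pow_add]
          _ = (a * a + a) * n ^ (a + b - 1) := by
              have e : a - 1 + b = a + b - 1 := by omega
              rw [e]
    calc ℓ ^ a * (n - ℓ) ^ b
        ≤ ((ℓ - 1).descFactorial a + (a * a + a) * n ^ (a - 1)) * (n - ℓ) ^ b :=
          Nat.mul_le_mul_right _ hA
      _ = (ℓ - 1).descFactorial a * (n - ℓ) ^ b + (a * a + a) * n ^ (a - 1) * (n - ℓ) ^ b := by
          ring
      _ ≤ (ℓ - 1).descFactorial a * (n - ℓ) ^ b + (a * a + a) * n ^ (a + b - 1) :=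
          Nat.add_le_add_left t1 _
  have step2 : (ℓ - 1).descFactorial a * (n - ℓ) ^ b
      ≤ (ℓ - 1).descFactorial a * (n - ℓ).descFactorial b + (b * b + b) * n ^ (a + b - 1) := by
    have t2 : (ℓ - 1).descFactorial a * ((b * b + b) * n ^ (b - 1))
        ≤ (b * b + b) * n ^ (a + b - 1) := by
      rcases Nat.eq_zero_or_pos b with rfl | hbpos
      · simp
      · calc (ℓ - 1).descFactorial a * ((b * b + b) * n ^ (b - 1))
            ≤ n ^ a * ((b * b + b) * n ^ (b - 1)) := Nat.mul_le_mul_right _ hD1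
          _ = (b * b + b) * n ^ (a + (b - 1)) := by rw [pow_add]; ring
          _ = (b * b + b) * n ^ (a + b - 1) := by
              have e : a + (b - 1) = a + b - 1 := by omega
              rw [e]
    calc (ℓ - 1).descFactorial a * (n - ℓ) ^ b
        ≤ (ℓ - 1).descFactorial a * ((n - ℓ).descFactorial b + (b * b + b) * n ^ (b - 1)) :=
          Nat.mul_le_mul_left _ hB
      _ = (ℓ - 1).descFactorial a * (n - ℓ).descFactorial b
          + (ℓ - 1).descFactorial a * ((b * b + b) * n ^ (b - 1)) := by ring
      _ ≤ (ℓ - 1).descFactorial a * (n - ℓ).descFactorial b + (b * b + b) * n ^ (a + b - 1) :=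
          Nat.add_le_add_left t2 _
  calc ℓ ^ a * (n - ℓ) ^ b
      ≤ (ℓ - 1).descFactorial a * (n - ℓ) ^ b + (a * a + a) * n ^ (a + b - 1) := step1
    _ ≤ ((ℓ - 1).descFactorial a * (n - ℓ).descFactorial b + (b * b + b) * n ^ (a + b - 1))
        + (a * a + a) * n ^ (a + b - 1) := Nat.add_le_add_right step2 _
    _ = (ℓ - 1).descFactorial a * (n - ℓ).descFactorial b
        + ((a * a + a) + (b * b + b)) * n ^ (a + b - 1) := by ring

lemma choose_prod_le {s t n ℓ : ℕ} (hs : 1 ≤ s) (hst : s ≤ t) (hℓ1 : 1 ≤ ℓ) (hℓn : ℓ ≤ n)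
    (hn : t ≤ n) :
    Nat.choose (ℓ - 1) (s - 1) * Nat.choose (n - ℓ) (t - s) ≤ Nat.choose n t := by
  rw [← count_eq hs hst hℓ1 hℓn]
  calc (((Finset.Icc 1 n).powersetCard t).filter (fun Y => nthSmallest Y s = ℓ)).card
      ≤ ((Finset.Icc 1 n).powersetCard t).card := Finset.card_filter_le _ _
    _ = (Finset.Icc 1 n).card.choose t := Finset.card_powersetCard _ _
    _ = Nat.choose n t := by rw [Nat.card_Icc]; congr 1

set_option maxHeartbeats 1000000 in
lemma approx (s t : ℕ) (ht : 3 ≤ t) (hs : 1 ≤ s) (hst : s ≤ t) :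
    ∃ C : ℝ, 0 < C ∧ ∀ n : ℕ, t ≤ n → ∀ ℓ : ℕ, 1 ≤ ℓ → ℓ ≤ n →
      |((Nat.choose (ℓ - 1) (s - 1) * Nat.choose (n - ℓ) (t - s) : ℕ) : ℝ) /
          (Nat.choose n t : ℝ) -
        (1 / (n : ℝ)) * PhiST s t ((ℓ : ℝ) / (n : ℝ))| ≤ C * (n : ℝ) ^ (-(1.5 : ℝ)) := by
  set a := s - 1 with hadef
  set b := t - s with hbdef
  have hab : a + b + 1 = t := by omega
  set K : ℕ := (a * a + a) + (b * b + b) + t * t with hKdef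
  set C : ℝ := (((1 + t.factorial) * (2 * t) ^ 2 + t.factorial * K * 2 ^ t : ℕ) : ℝ) with hCdef
  have hCposN : 0 < (1 + t.factorial) * (2 * t) ^ 2 + t.factorial * K * 2 ^ t :=
    Nat.lt_of_lt_of_le (Nat.mul_pos (by omega) (pow_pos (by omega) 2))
      (Nat.le_add_right _ _)
  have hCpos : 0 < C := by rw [hCdef]; exact_mod_cast hCposN
  refine ⟨C, hCpos, ?_⟩
  intro n hn ℓ hℓ1 hℓn
  have hn0 : (0 : ℝ) < n := by
    have : 0 < n := by omega
    exact_mod_cast this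
  -- abbreviations
  set D1 : ℝ := (((ℓ - 1).descFactorial a : ℕ) : ℝ) with hD1def
  set D2 : ℝ := (((n - ℓ).descFactorial b : ℕ) : ℝ) with hD2def
  set DD : ℝ := ((n.descFactorial t : ℕ) : ℝ) with hDDdef
  set y1 : ℝ := (ℓ : ℝ) ^ a with hy1def
  set y2 : ℝ := ((n - ℓ : ℕ) : ℝ) ^ b with hy2def
  set Z : ℝ := (n : ℝ) ^ t with hZdef
  have hfa : (0 : ℝ) < (a.factorial : ℝ) := by exact_mod_cast a.factorial_pos
  have hfb : (0 : ℝ) < (b.factorial : ℝ) := by exact_mod_cast b.factorial_pos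
  have hft : (0 : ℝ) < (t.factorial : ℝ) := by exact_mod_cast t.factorial_pos
  have hchoose : (0 : ℝ) < (Nat.choose n t : ℝ) := by exact_mod_cast Nat.choose_pos hn
  have hZ0 : (0 : ℝ) < Z := by rw [hZdef]; positivity
  have hDD0 : (0 : ℝ) < DD := by
    rw [hDDdef]
    have : 0 < n.descFactorial t := by
      rw [Nat.descFactorial_eq_factorial_mul_choose]
      exact Nat.mul_pos t.factorial_pos (Nat.choose_pos hn)
    exact_mod_cast this
  -- closed form for P
  have hd1 : D1 = (a.factorial : ℝ) * (Nat.choose (ℓ - 1) a : ℝ) := by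
    rw [hD1def]; exact_mod_cast congrArg (Nat.cast (R := ℝ))
      (Nat.descFactorial_eq_factorial_mul_choose (ℓ - 1) a)
  have hd2 : D2 = (b.factorial : ℝ) * (Nat.choose (n - ℓ) b : ℝ) := by
    rw [hD2def]; exact_mod_cast congrArg (Nat.cast (R := ℝ))
      (Nat.descFactorial_eq_factorial_mul_choose (n - ℓ) b)
  have hdd : DD = (t.factorial : ℝ) * (Nat.choose n t : ℝ) := by
    rw [hDDdef]; exact_mod_cast congrArg (Nat.cast (R := ℝ))
      (Nat.descFactorial_eq_factorial_mul_choose n t)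
  have hP : ((Nat.choose (ℓ - 1) a * Nat.choose (n - ℓ) b : ℕ) : ℝ) / (Nat.choose n t : ℝ)
      = ((t.factorial : ℝ) / ((a.factorial : ℝ) * (b.factorial : ℝ))) * (D1 * D2 / DD) := by
    rw [hd1, hd2, hdd]
    push_cast
    field_simp
  -- closed form for T
  have hsub : ((n - ℓ : ℕ) : ℝ) = (n : ℝ) - (ℓ : ℝ) := by
    rw [Nat.cast_sub hℓn]
  have hT : (1 / (n : ℝ)) * PhiST s t ((ℓ : ℝ) / (n : ℝ))
      = ((t.factorial : ℝ) / ((a.factorial : ℝ) * (b.factorial : ℝ))) * (y1 * y2 / Z) := by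
    rw [PhiST, ← hadef, ← hbdef]
    have h1my : (1 : ℝ) - (ℓ : ℝ) / (n : ℝ) = ((n - ℓ : ℕ) : ℝ) / (n : ℝ) := by
      rw [hsub]; field_simp
    rw [h1my, div_pow, div_pow, hZdef, hy1def, hy2def]
    have hZsplit : (n : ℝ) ^ t = (n : ℝ) ^ a * (n : ℝ) ^ b * (n : ℝ) := by
      rw [← pow_add, ← pow_succ, hab]
    rw [hZsplit]
    field_simp
  rw [hP, hT, ← mul_sub, abs_mul,
    abs_of_nonneg (by positivity : (0:ℝ) ≤ (t.factorial : ℝ) / ((a.factorial : ℝ) * (b.factorial : ℝ)))]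
  -- bounds
  have hf1 : D1 * D2 ≤ y1 * y2 := by
    rw [hD1def, hD2def, hy1def, hy2def]
    have h1 : (ℓ - 1).descFactorial a * (n - ℓ).descFactorial b ≤ ℓ ^ a * (n - ℓ) ^ b :=
      Nat.mul_le_mul
        (le_trans (Nat.descFactorial_le_pow _ _) (Nat.pow_le_pow_left (by omega) _))
        (Nat.descFactorial_le_pow _ _)
    exact_mod_cast h1
  have hf2 : y1 * y2 ≤ D1 * D2 + (((a * a + a) + (b * b + b) : ℕ) : ℝ) * (n : ℝ) ^ (t - 2) := by
    rw [hD1def, hD2def, hy1def, hy2def]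
    have h1 := key_nat a b n ℓ hℓ1 hℓn
    have h2 : a + b - 1 = t - 2 := by omega
    rw [h2] at h1
    exact_mod_cast h1
  have hf3 : DD ≤ Z := by
    rw [hDDdef, hZdef]; exact_mod_cast Nat.descFactorial_le_pow n t
  have hf4 : Z ≤ DD + ((t * t : ℕ) : ℝ) * (n : ℝ) ^ (t - 1) := by
    rw [hDDdef, hZdef]
    exact_mod_cast pow_le_descFactorial_add n t
  have hy1n : y1 ≤ (n : ℝ) ^ a := by
    rw [hy1def]
    have : (ℓ : ℝ) ≤ (n : ℝ) := by exact_mod_cast hℓn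
    exact pow_le_pow_left₀ (by positivity) this a
  have hy2n : y2 ≤ (n : ℝ) ^ b := by
    rw [hy2def]
    have : ((n - ℓ : ℕ) : ℝ) ≤ (n : ℝ) := by exact_mod_cast Nat.sub_le n ℓ
    exact pow_le_pow_left₀ (by positivity) this b
  have hy10 : 0 ≤ y1 := by rw [hy1def]; positivity
  have hy20 : 0 ≤ y2 := by rw [hy2def]; positivity
  have hyz : y1 * y2 ≤ (n : ℝ) ^ (t - 1) := by
    have : (n : ℝ) ^ a * (n : ℝ) ^ b = (n : ℝ) ^ (t - 1) := by
      rw [← pow_add]; congr 1; omega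
    calc y1 * y2 ≤ (n : ℝ) ^ a * (n : ℝ) ^ b :=
          mul_le_mul hy1n hy2n hy20 (by positivity)
      _ = (n : ℝ) ^ (t - 1) := this
  -- numerator bound
  have hD1D20 : 0 ≤ D1 * D2 := by rw [hD1def, hD2def]; positivity
  have hnum : |D1 * D2 * Z - y1 * y2 * DD| ≤ (K : ℝ) * (n : ℝ) ^ (2 * t - 2) := by
    have hsplit : D1 * D2 * Z - y1 * y2 * DD
        = (D1 * D2 - y1 * y2) * Z + y1 * y2 * (Z - DD) := by ring
    have e1 : (n : ℝ) ^ (t - 2) * (n : ℝ) ^ t = (n : ℝ) ^ (2 * t - 2) := by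
      rw [← pow_add]; congr 1; omega
    have e2 : (n : ℝ) ^ (t - 1) * (n : ℝ) ^ (t - 1) = (n : ℝ) ^ (2 * t - 2) := by
      rw [← pow_add]; congr 1; omega
    have b1 : |(D1 * D2 - y1 * y2) * Z|
        ≤ (((a * a + a) + (b * b + b) : ℕ) : ℝ) * (n : ℝ) ^ (2 * t - 2) := by
      rw [abs_mul, abs_of_pos hZ0, abs_of_nonpos (by linarith), neg_sub]
      calc (y1 * y2 - D1 * D2) * Z
          ≤ ((((a * a + a) + (b * b + b) : ℕ) : ℝ) * (n : ℝ) ^ (t - 2)) * Z := by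
            apply mul_le_mul_of_nonneg_right (by linarith) (le_of_lt hZ0)
        _ = (((a * a + a) + (b * b + b) : ℕ) : ℝ) * (n : ℝ) ^ (2 * t - 2) := by
            rw [hZdef, mul_assoc, e1]
    have b2 : |y1 * y2 * (Z - DD)| ≤ ((t * t : ℕ) : ℝ) * (n : ℝ) ^ (2 * t - 2) := by
      rw [abs_mul, abs_of_nonneg (by positivity : (0:ℝ) ≤ y1 * y2),
        abs_of_nonneg (by linarith)]
      calc y1 * y2 * (Z - DD)
          ≤ (n : ℝ) ^ (t - 1) * (((t * t : ℕ) : ℝ) * (n : ℝ) ^ (t - 1)) := by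
            apply mul_le_mul hyz (by linarith) (by linarith) (by positivity)
        _ = ((t * t : ℕ) : ℝ) * (n : ℝ) ^ (2 * t - 2) := by
            rw [← e2]; ring
    calc |D1 * D2 * Z - y1 * y2 * DD|
        ≤ |(D1 * D2 - y1 * y2) * Z| + |y1 * y2 * (Z - DD)| := by
          rw [hsplit]; exact abs_add_le _ _
      _ ≤ (((a * a + a) + (b * b + b) : ℕ) : ℝ) * (n : ℝ) ^ (2 * t - 2)
          + ((t * t : ℕ) : ℝ) * (n : ℝ) ^ (2 * t - 2) := add_le_add b1 b2
      _ = (K : ℝ) * (n : ℝ) ^ (2 * t - 2) := by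
          rw [hKdef]; push_cast; ring
  -- the difference of ratios
  have hdiff : |D1 * D2 / DD - y1 * y2 / Z| = |D1 * D2 * Z - y1 * y2 * DD| / (DD * Z) := by
    rw [div_sub_div _ _ (ne_of_gt hDD0) (ne_of_gt hZ0), abs_div,
      abs_of_pos (mul_pos hDD0 hZ0), mul_comm DD (y1 * y2)]
  -- main bound: ≤ C / n^2
  have hmain : ((t.factorial : ℝ) / ((a.factorial : ℝ) * (b.factorial : ℝ))) *
      |D1 * D2 / DD - y1 * y2 / Z| ≤ C / (n : ℝ) ^ 2 := by
    have hfab1 : (1 : ℝ) ≤ (a.factorial : ℝ) * (b.factorial : ℝ) := by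
      have : 1 ≤ a.factorial * b.factorial := Nat.one_le_iff_ne_zero.mpr
        (Nat.mul_ne_zero a.factorial_pos.ne' b.factorial_pos.ne')
      exact_mod_cast this
    have hfrac : ((t.factorial : ℝ) / ((a.factorial : ℝ) * (b.factorial : ℝ)))
        ≤ (t.factorial : ℝ) := by
      rw [div_le_iff₀ (by linarith)]
      exact le_mul_of_one_le_right hft.le hfab1
    have hn1 : (1 : ℝ) ≤ (n : ℝ) := by
      have : 1 ≤ n := by omega
      exact_mod_cast this
    rcases lt_or_ge n (2 * t) with hsmall | hbig
    · -- small n : crude bound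
      have hnatle : a.factorial * Nat.choose (ℓ - 1) a * (b.factorial * Nat.choose (n - ℓ) b)
          ≤ t.factorial * Nat.choose n t := by
        have hfact : a.factorial * b.factorial ≤ t.factorial := by
          refine le_trans (Nat.le_of_dvd (a + b).factorial_pos
            (Nat.factorial_mul_factorial_dvd_factorial_add a b)) (Nat.factorial_le (by omega))
        have hple := choose_prod_le hs hst hℓ1 hℓn hn
        calc a.factorial * Nat.choose (ℓ - 1) a * (b.factorial * Nat.choose (n - ℓ) b)
            = (a.factorial * b.factorial) * (Nat.choose (ℓ - 1) a * Nat.choose (n - ℓ) b) := by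
              ring
          _ ≤ t.factorial * Nat.choose n t := Nat.mul_le_mul hfact hple
      have hPle : D1 * D2 / DD ≤ 1 := by
        rw [div_le_one hDD0, hd1, hd2, hdd]
        exact_mod_cast hnatle
      have hP0 : 0 ≤ D1 * D2 / DD := div_nonneg hD1D20 hDD0.le
      have hTle : y1 * y2 / Z ≤ 1 := by
        rw [div_le_one hZ0, hZdef]
        calc y1 * y2 ≤ (n : ℝ) ^ (t - 1) := hyz
          _ ≤ (n : ℝ) ^ t := pow_le_pow_right₀ hn1 (by omega)
      have hT0 : 0 ≤ y1 * y2 / Z := div_nonneg (by positivity) hZ0.le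
      have habs1 : |D1 * D2 / DD - y1 * y2 / Z| ≤ 1 := by
        rw [abs_le]; constructor <;> linarith
      have hCge : ((1 + (t.factorial : ℝ)) * (2 * t) ^ 2) ≤ C := by
        rw [hCdef]
        push_cast
        have : (0 : ℝ) ≤ (t.factorial : ℝ) * K * 2 ^ t := by positivity
        linarith
      have hn2t : (n : ℝ) ≤ 2 * t := by
        have : n ≤ 2 * t := by omega
        exact_mod_cast this
      calc ((t.factorial : ℝ) / ((a.factorial : ℝ) * (b.factorial : ℝ))) *
            |D1 * D2 / DD - y1 * y2 / Z|
          ≤ (t.factorial : ℝ) * 1 := by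
            apply mul_le_mul hfrac habs1 (abs_nonneg _) hft.le
        _ ≤ C / (n : ℝ) ^ 2 := by
            rw [le_div_iff₀ (by positivity)]
            have hnsq : (n : ℝ) ^ 2 ≤ (2 * (t : ℝ)) ^ 2 :=
              pow_le_pow_left₀ hn0.le hn2t 2
            have p1 : (t.factorial : ℝ) * ((n : ℝ) ^ 2) ≤ (t.factorial : ℝ) * (2 * (t : ℝ)) ^ 2 :=
              mul_le_mul_of_nonneg_left hnsq hft.le
            have p2 : (0 : ℝ) ≤ (2 * (t : ℝ)) ^ 2 := by positivity
            calc (t.factorial : ℝ) * 1 * (n : ℝ) ^ 2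
                = (t.factorial : ℝ) * ((n : ℝ) ^ 2) := by ring
              _ ≤ (1 + (t.factorial : ℝ)) * (2 * (t : ℝ)) ^ 2 := by linarith
              _ ≤ C := hCge
    · -- large n : use the descFactorial estimates
      have h2t : 2 * (t : ℝ) ≤ (n : ℝ) := by exact_mod_cast hbig
      have hDlow : (n : ℝ) ^ t / 2 ^ t ≤ DD := by
        have h1 : ((n - t : ℕ) : ℝ) ^ t ≤ DD := by
          rw [hDDdef]
          exact_mod_cast sub_pow_le_descFactorial n t t le_rfl
        have h2 : (n : ℝ) / 2 ≤ ((n - t : ℕ) : ℝ) := by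
          rw [Nat.cast_sub hn]
          linarith
        calc (n : ℝ) ^ t / 2 ^ t = ((n : ℝ) / 2) ^ t := by rw [div_pow]
          _ ≤ ((n - t : ℕ) : ℝ) ^ t := pow_le_pow_left₀ (by positivity) h2 t
          _ ≤ DD := h1
      have hdenlow : (n : ℝ) ^ t / 2 ^ t * Z ≤ DD * Z :=
        mul_le_mul_of_nonneg_right hDlow hZ0.le
      have e3 : (n : ℝ) ^ (2 * t - 2) * (n : ℝ) ^ 2 = (n : ℝ) ^ t * (n : ℝ) ^ t := by
        rw [← pow_add, ← pow_add]; congr 1; omega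
      have hstep : |D1 * D2 / DD - y1 * y2 / Z| ≤ (K : ℝ) * 2 ^ t / (n : ℝ) ^ 2 := by
        rw [hdiff]
        calc |D1 * D2 * Z - y1 * y2 * DD| / (DD * Z)
            ≤ ((K : ℝ) * (n : ℝ) ^ (2 * t - 2)) / ((n : ℝ) ^ t / 2 ^ t * Z) :=
              div_le_div₀ (by positivity) hnum (by positivity) hdenlow
          _ = (K : ℝ) * 2 ^ t / (n : ℝ) ^ 2 := by
              rw [hZdef, div_eq_div_iff (by positivity) (by positivity)]
              field_simp
              linear_combination (K : ℝ) * e3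
      have hCge2 : (t.factorial : ℝ) * (K : ℝ) * 2 ^ t ≤ C := by
        rw [hCdef]
        push_cast
        have : (0 : ℝ) ≤ (1 + (t.factorial : ℝ)) * (2 * t) ^ 2 := by positivity
        linarith
      calc ((t.factorial : ℝ) / ((a.factorial : ℝ) * (b.factorial : ℝ))) *
            |D1 * D2 / DD - y1 * y2 / Z|
          ≤ (t.factorial : ℝ) * ((K : ℝ) * 2 ^ t / (n : ℝ) ^ 2) := by
            apply mul_le_mul hfrac hstep (abs_nonneg _) hft.le
        _ = (t.factorial : ℝ) * (K : ℝ) * 2 ^ t / (n : ℝ) ^ 2 := by ring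
        _ ≤ C / (n : ℝ) ^ 2 := by
            exact (div_le_div_iff_of_pos_right (by positivity)).mpr hCge2
  -- convert C / n^2 to C * n ^ (-1.5)
  have hpow15 : ((n : ℝ) ^ 2)⁻¹ ≤ (n : ℝ) ^ (-(1.5 : ℝ)) := by
    have h1n : (1 : ℝ) ≤ (n : ℝ) := by
      have : 1 ≤ n := by omega
      exact_mod_cast this
    rw [Real.rpow_neg hn0.le]
    apply inv_anti₀ (Real.rpow_pos_of_pos hn0 _)
    calc (n : ℝ) ^ (1.5 : ℝ) ≤ (n : ℝ) ^ (2 : ℝ) :=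
          Real.rpow_le_rpow_of_exponent_le h1n (by norm_num)
      _ = (n : ℝ) ^ (2 : ℕ) := by
          rw [show ((2 : ℝ)) = ((2 : ℕ) : ℝ) by norm_num, Real.rpow_natCast]
  calc ((t.factorial : ℝ) / ((a.factorial : ℝ) * (b.factorial : ℝ))) *
        |D1 * D2 / DD - y1 * y2 / Z| ≤ C / (n : ℝ) ^ 2 := hmain
    _ = C * ((n : ℝ) ^ 2)⁻¹ := by rw [div_eq_mul_inv]
    _ ≤ C * (n : ℝ) ^ (-(1.5 : ℝ)) := mul_le_mul_of_nonneg_left hpow15 hCpos.le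

/-- Lemma: discrete order statistics approximate the continuous ones.
Fix `t ≥ 3` and `1 ≤ s ≤ t`. For a uniformly random `t`-element subset of `{1,…,n}`
(`n ≥ t`) with `s`-th smallest element `Y_s`:
`P(Y_s = ℓ) = C(ℓ−1,s−1)·C(n−ℓ,t−s)/C(n,t)` for every `ℓ ∈ {1,…,n}`, and there is a
constant `C > 0` (depending only on `s,t`) with
`| P(Y_s = ℓ) − (1/n)·Φ_s^t(ℓ/n) | ≤ C·n^{−1.5}` for all `n ≥ t`, `1 ≤ ℓ ≤ n`. -/
theorem discrete_order_statistic_distribution (s t : ℕ) (ht : 3 ≤ t)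
    (hs : 1 ≤ s) (hst : s ≤ t) :
    (∀ n : ℕ, t ≤ n → ∀ ℓ ∈ Finset.Icc 1 n,
      (((((Finset.Icc 1 n).powersetCard t).filter
            (fun Y => nthSmallest Y s = ℓ)).card : ℚ) / (Nat.choose n t : ℚ))
        = ((Nat.choose (ℓ - 1) (s - 1) * Nat.choose (n - ℓ) (t - s) : ℕ) : ℚ) /
            (Nat.choose n t : ℚ)) ∧
    (∃ C : ℝ, 0 < C ∧ ∀ n : ℕ, t ≤ n → ∀ ℓ : ℕ, 1 ≤ ℓ → ℓ ≤ n →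
      |(((((Finset.Icc 1 n).powersetCard t).filter
            (fun Y => nthSmallest Y s = ℓ)).card : ℝ) / (Nat.choose n t : ℝ)) -
          (1 / (n : ℝ)) * PhiST s t ((ℓ : ℝ) / (n : ℝ))|
        ≤ C * (n : ℝ) ^ (-(1.5 : ℝ))) := by
  constructor
  · intro n hn ℓ hℓ
    rw [Finset.mem_Icc] at hℓ
    rw [count_eq hs hst hℓ.1 hℓ.2]
  · obtain ⟨C, hC, h⟩ := approx s t ht hs hst
    refine ⟨C, hC, fun n hn ℓ h1 h2 => ?_⟩
    rw [count_eq hs hst h1 h2]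
    exact h n hn ℓ h1 h2
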